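/- Every graph G satisfies α_2(G) ≥ Σ_{v∈V(G)} min{1, 2/(d(v)+1)}, where α_2(G) is the maximum number of vertices of an induced forest in G and d(v) denotes vertex degree. -/

import Mathlib

open SimpleGraph Finset

variable {V : Type} [Fintype V] [DecidableEq V] {n : ℕ}

/-- rank of `u` within `T` under the order `σ`. -/
def rk (T : Finset V) (u : V) (σ : V ≃ Fin n) : ℕ :=
  ((T.erase u).filter (fun w => σ w < σ u)).card

lemma rk_lt_of_mem {T : Finset V} {u : V} (hu : u ∈ T) (σ : V ≃ Fin n) :
    rk T u σ < T.card := by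
  calc rk T u σ ≤ (T.erase u).card := Finset.card_le_card (Finset.filter_subset _ _)
  _ < T.card := Finset.card_erase_lt_of_mem hu

lemma rk_strict {T : Finset V} {u u' : V} (hu : u ∈ T) (hu' : u' ∈ T) (σ : V ≃ Fin n)
    (h : σ u < σ u') : rk T u σ < rk T u' σ := by
  have hne : u ≠ u' := fun he => absurd (he ▸ h) (lt_irrefl _)
  have hsub : insert u ((T.erase u).filter (fun w => σ w < σ u)) ⊆
      (T.erase u').filter (fun w => σ w < σ u') := by
    intro w hw
    rcases Finset.mem_insert.mp hw with rfl | hw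
    · exact Finset.mem_filter.mpr ⟨Finset.mem_erase.mpr ⟨hne, hu⟩, h⟩
    · obtain ⟨hw1, hw2⟩ := Finset.mem_filter.mp hw
      have hwT := Finset.mem_of_mem_erase hw1
      have : σ w < σ u' := hw2.trans h
      exact Finset.mem_filter.mpr ⟨Finset.mem_erase.mpr
        ⟨fun he => absurd (he ▸ this) (lt_irrefl _), hwT⟩, this⟩
  have hnotmem : u ∉ (T.erase u).filter (fun w => σ w < σ u) := by
    intro hmem
    exact (Finset.mem_erase.mp (Finset.mem_filter.mp hmem).1).1 rfl
  calc rk T u σ < rk T u σ + 1 := Nat.lt_succ_self _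
  _ = (insert u ((T.erase u).filter (fun w => σ w < σ u))).card :=
      (Finset.card_insert_of_notMem hnotmem).symm
  _ ≤ rk T u' σ := Finset.card_le_card hsub

lemma rk_injOn {T : Finset V} (σ : V ≃ Fin n) :
    Set.InjOn (fun u => rk T u σ) T := by
  intro u hu u' hu' he
  by_contra hne
  rcases lt_trichotomy (σ u) (σ u') with h | h | h
  · exact absurd he (Nat.ne_of_lt (rk_strict hu hu' σ h))
  · exact hne (σ.injective h)
  · exact absurd he.symm (Nat.ne_of_lt (rk_strict hu' hu σ h))

lemma exists_rk {T : Finset V} {j : ℕ} (hj : j < T.card) (σ : V ≃ Fin n) :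
    ∃ u ∈ T, rk T u σ = j := by
  have himg : T.image (fun u => rk T u σ) = Finset.range T.card := by
    apply Finset.eq_of_subset_of_card_le
    · intro x hx
      obtain ⟨u, hu, rfl⟩ := Finset.mem_image.mp hx
      exact Finset.mem_range.mpr (rk_lt_of_mem hu σ)
    · rw [Finset.card_range, Finset.card_image_of_injOn (rk_injOn σ)]
  have : j ∈ T.image (fun u => rk T u σ) := by
    rw [himg]; exact Finset.mem_range.mpr hj
  obtain ⟨u, hu, he⟩ := Finset.mem_image.mp this
  exact ⟨u, hu, he⟩

lemma rk_swap {T : Finset V} {u v : V} (hu : u ∈ T) (hv : v ∈ T) (σ : V ≃ Fin n) :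
    rk T v ((Equiv.swap u v).trans σ) = rk T u σ := by
  unfold rk
  apply Finset.card_bij (fun w _ => Equiv.swap u v w)
  · intro w hw
    obtain ⟨hw1, hw2⟩ := Finset.mem_filter.mp hw
    obtain ⟨hwv, hwT⟩ := Finset.mem_erase.mp hw1
    refine Finset.mem_filter.mpr ⟨Finset.mem_erase.mpr ⟨?_, ?_⟩, ?_⟩
    · intro he
      exact hwv (by have := congrArg (Equiv.swap u v) he; simpa using this)
    · rcases eq_or_ne w u with rfl | hwu
      · rwa [Equiv.swap_apply_left]
      · rw [Equiv.swap_apply_of_ne_of_ne hwu hwv]; exact hwT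
    · have : ((Equiv.swap u v).trans σ) v = σ u := by simp
      simpa [this] using hw2
  · intro w hw w' hw' he
    exact (Equiv.swap u v).injective he
  · intro w hw
    obtain ⟨hw1, hw2⟩ := Finset.mem_filter.mp hw
    obtain ⟨hwu, hwT⟩ := Finset.mem_erase.mp hw1
    refine ⟨Equiv.swap u v w, Finset.mem_filter.mpr ⟨Finset.mem_erase.mpr ⟨?_, ?_⟩, ?_⟩, by simp⟩
    · intro he
      exact hwu (by have := congrArg (Equiv.swap u v) he; simpa using this)
    · rcases eq_or_ne w v with rfl | hwv
      · rwa [Equiv.swap_apply_right]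
      · rw [Equiv.swap_apply_of_ne_of_ne hwu hwv]; exact hwT
    · simpa using hw2

lemma fiber_card_le {T : Finset V} {u v : V} (hu : u ∈ T) (hv : v ∈ T) (j : ℕ) :
    (Finset.univ.filter (fun σ : V ≃ Fin n => rk T u σ = j)).card ≤
    (Finset.univ.filter (fun σ : V ≃ Fin n => rk T v σ = j)).card := by
  apply Finset.card_le_card_of_injOn (fun σ => (Equiv.swap u v).trans σ)
  · intro σ hσ
    rw [Finset.mem_coe, Finset.mem_filter] at hσ ⊢
    exact ⟨Finset.mem_univ _, by rw [rk_swap hu hv]; exact hσ.2⟩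
  · intro σ _ σ' _ he
    ext x
    have := congrFun (congrArg (fun (e : V ≃ Fin n) => e.toFun) he) (Equiv.swap u v x)
    simp only [Equiv.toFun_as_coe, Equiv.trans_apply, Equiv.swap_apply_self] at this
    exact congrArg Fin.val this

lemma partition_rk {T : Finset V} {j : ℕ} (hj : j < T.card) :
    Fintype.card (V ≃ Fin n) =
      ∑ u ∈ T, (Finset.univ.filter (fun σ : V ≃ Fin n => rk T u σ = j)).card := by
  classical
  have hcover : (Finset.univ : Finset (V ≃ Fin n)) =
      T.biUnion (fun u => Finset.univ.filter (fun σ => rk T u σ = j)) := by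
    ext σ
    simp only [Finset.mem_univ, Finset.mem_biUnion, Finset.mem_filter, true_and, true_iff]
    exact exists_rk hj σ
  have hdisj : ∀ u ∈ T, ∀ u' ∈ T, u ≠ u' →
      Disjoint (Finset.univ.filter (fun σ : V ≃ Fin n => rk T u σ = j))
        (Finset.univ.filter (fun σ : V ≃ Fin n => rk T u' σ = j)) := ?_
  · calc Fintype.card (V ≃ Fin n) = (Finset.univ : Finset (V ≃ Fin n)).card :=
        (Finset.card_univ).symm
    _ = (T.biUnion (fun u => Finset.univ.filter (fun σ => rk T u σ = j))).card :=
        congrArg Finset.card hcover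
    _ = ∑ u ∈ T, (Finset.univ.filter (fun σ : V ≃ Fin n => rk T u σ = j)).card :=
        Finset.card_biUnion hdisj
  intro u hu u' hu' hne
  apply Finset.disjoint_left.mpr
  intro σ hσ hσ'
  exact hne (rk_injOn σ hu hu'
    ((Finset.mem_filter.mp hσ).2.trans (Finset.mem_filter.mp hσ').2.symm))

lemma key_count {T : Finset V} {v : V} (hv : v ∈ T) {j : ℕ} (hj : j < T.card) :
    Fintype.card (V ≃ Fin n) ≤
      T.card * (Finset.univ.filter (fun σ : V ≃ Fin n => rk T v σ = j)).card := by
  rw [partition_rk (n := n) (T := T) hj]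
  calc ∑ u ∈ T, (Finset.univ.filter (fun σ : V ≃ Fin n => rk T u σ = j)).card
      ≤ ∑ _u ∈ T, (Finset.univ.filter (fun σ : V ≃ Fin n => rk T v σ = j)).card :=
        Finset.sum_le_sum (fun u hu => fiber_card_le hu hv j)
    _ = T.card * _ := by rw [Finset.sum_const, smul_eq_mul]

open SimpleGraph Finset

lemma forest_of_few_back {V : Type} {G : SimpleGraph V} {n : ℕ} (f : V → Fin n)
    (hf : Function.Injective f) (S : Set V)
    (h : ∀ v ∈ S, ∀ a b : V, G.Adj v a → G.Adj v b → f a < f v → f b < f v → a = b) :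
    (G.induce S).IsAcyclic := by
  classical
  intro a p hp
  -- pick the maximal vertex on the cycle
  obtain ⟨u, hu, hmax⟩ := Finset.exists_max_image p.support.toFinset (fun x => f x.val)
    ⟨a, List.mem_toFinset.mpr p.start_mem_support⟩
  simp only [List.mem_toFinset] at hu
  have hq := hp.rotate hu
  set q := p.rotate u hu with hqdef
  have hmemq : ∀ x : S, x ∈ q.support → f x.val ≤ f u.val := by
    intro x hx
    rw [q.support_eq_cons] at hx
    rcases List.mem_cons.mp hx with rfl | hx
    · exact le_refl _
    · exact hmax x (List.mem_toFinset.mpr (List.mem_of_mem_tail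
        (((SimpleGraph.Walk.support_rotate p u hu).mem_iff).mp hx)))
  clear_value q
  cases q with
  | nil => simp [Walk.IsCycle] at hq
  | cons hadj q₁ =>
    rename_i b
    have hub : u ≠ b := (hadj.ne)
    -- last edge via reverse of q₁
    obtain ⟨c, hadj2, q₂, hq₂⟩ := SimpleGraph.Walk.exists_eq_cons_of_ne
      (show u ≠ b from hub) q₁.reverse
    -- memberships
    have hbmem : b ∈ (Walk.cons hadj q₁).support := by
      simp [Walk.support_cons, Walk.start_mem_support]
    have hcmem1 : c ∈ q₁.support := by
      have : c ∈ q₁.reverse.support := by rw [hq₂]; simp [Walk.support_cons]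
      rwa [Walk.support_reverse, List.mem_reverse] at this
    have hcmem : c ∈ (Walk.cons hadj q₁).support := by
      simp [Walk.support_cons]; right; exact hcmem1
    -- s(u,c) ∈ q₁.edges
    have hedge : s(u, c) ∈ q₁.edges := by
      have : s(u, c) ∈ q₁.reverse.edges := by rw [hq₂]; simp
      rwa [Walk.edges_reverse, List.mem_reverse] at this
    have hbc : b ≠ c := by
      intro hbceq
      have hnd := hq.edges_nodup
      rw [Walk.edges_cons, List.nodup_cons] at hnd
      cases hbceq; exact hnd.1 hedge
    -- adjacencies in G
    have hGb : G.Adj u.val b.val := hadj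
    have hGc : G.Adj u.val c.val := hadj2
    have hfb : f b.val < f u.val := by
      have hle := hmemq b hbmem
      exact lt_of_le_of_ne hle (fun he => hGb.ne' (hf he))
    have hfc : f c.val < f u.val := by
      have hle := hmemq c hcmem
      exact lt_of_le_of_ne hle (fun he => hGc.ne' (hf he))
    exact hbc (Subtype.ext (h u.val u.prop b.val c.val hGb hGc hfb hfc))

open SimpleGraph Finset

/-- Alon–Kahn–Seymour bound: every graph `G` has an induced forest on at least
`Σ_{v ∈ V(G)} min {1, 2/(d(v)+1)}` vertices, i.e.
`α₂(G) ≥ Σ_v min {1, 2/(d(v)+1)}`. -/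
theorem stmt_8 {V : Type} [Fintype V] (G : SimpleGraph V) [DecidableRel G.Adj] :
    ∃ S : Finset V, (G.induce (S : Set V)).IsAcyclic ∧
      ∑ v : V, min (1 : ℝ) (2 / (G.degree v + 1)) ≤ S.card := by
  classical
  set n := Fintype.card V with hn
  set N := Fintype.card (V ≃ Fin n) with hNdef
  set T : V → Finset V := fun v => insert v (G.neighborFinset v) with hT
  have hvT : ∀ v, v ∈ T v := fun v => Finset.mem_insert_self _ _
  have hTcard : ∀ v, (T v).card = G.degree v + 1 := by
    intro v
    rw [hT, Finset.card_insert_of_notMem (SimpleGraph.notMem_neighborFinset_self G v),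
      SimpleGraph.card_neighborFinset_eq_degree]
  have herase : ∀ v, (T v).erase v = G.neighborFinset v := fun v =>
    Finset.erase_insert (SimpleGraph.notMem_neighborFinset_self G v)
  set P : V → (V ≃ Fin n) → Prop := fun v σ => rk (T v) v σ ≤ 1 with hP
  set Sf : (V ≃ Fin n) → Finset V := fun σ => Finset.univ.filter (fun v => P v σ) with hSf
  -- acyclicity
  have hac : ∀ σ : V ≃ Fin n, (G.induce ((Sf σ : Finset V) : Set V)).IsAcyclic := by
    intro σ
    apply forest_of_few_back (fun v => σ v) σ.injective
    intro v hv a b hva hvb hfa hfb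
    have hvS : v ∈ Sf σ := Finset.mem_coe.mp hv
    have hP1 : rk (T v) v σ ≤ 1 := (Finset.mem_filter.mp hvS).2
    have hrk : ((G.neighborFinset v).filter (fun w => σ w < σ v)).card ≤ 1 := by
      rw [← herase v]; exact hP1
    refine Finset.card_le_one.mp hrk a ?_ b ?_
    · exact Finset.mem_filter.mpr ⟨(SimpleGraph.mem_neighborFinset G v a).mpr hva, hfa⟩
    · exact Finset.mem_filter.mpr ⟨(SimpleGraph.mem_neighborFinset G v b).mpr hvb, hfb⟩
  -- per-vertex count
  have hkey : ∀ v : V, (N : ℝ) * min (1:ℝ) (2 / ((G.degree v : ℝ) + 1)) ≤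
      ((Finset.univ.filter (fun σ : V ≃ Fin n => P v σ)).card : ℝ) := by
    intro v
    by_cases hd : G.degree v = 0
    · have hall : ∀ σ : V ≃ Fin n, P v σ := by
        intro σ
        have h1 : rk (T v) v σ ≤ ((T v).erase v).card :=
          Finset.card_le_card (Finset.filter_subset _ _)
        rw [herase v] at h1
        have : (G.neighborFinset v).card = 0 := by
          rw [SimpleGraph.card_neighborFinset_eq_degree, hd]
        rw [this] at h1
        exact h1.trans (by norm_num)
      rw [Finset.filter_true_of_mem (fun σ _ => hall σ), Finset.card_univ, ← hNdef]
      calc (N : ℝ) * min (1:ℝ) (2 / ((G.degree v : ℝ) + 1)) ≤ (N : ℝ) * 1 := by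
            apply mul_le_mul_of_nonneg_left (min_le_left _ _) (by positivity)
        _ = (N : ℝ) := mul_one _
    · have hd1 : 1 ≤ G.degree v := Nat.one_le_iff_ne_zero.mpr hd
      have hk2 : 2 ≤ (T v).card := by rw [hTcard]; omega
      have h0 : N ≤ (T v).card *
          (Finset.univ.filter (fun σ : V ≃ Fin n => rk (T v) v σ = 0)).card :=
        key_count (hvT v) (by omega)
      have h1 : N ≤ (T v).card *
          (Finset.univ.filter (fun σ : V ≃ Fin n => rk (T v) v σ = 1)).card :=
        key_count (hvT v) (by omega)
      have hsplit : (Finset.univ.filter (fun σ : V ≃ Fin n => P v σ)).card =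
          (Finset.univ.filter (fun σ : V ≃ Fin n => rk (T v) v σ = 0)).card +
          (Finset.univ.filter (fun σ : V ≃ Fin n => rk (T v) v σ = 1)).card := by
        have hiff : ∀ σ : V ≃ Fin n, P v σ ↔
            (rk (T v) v σ = 0 ∨ rk (T v) v σ = 1) := fun σ => Nat.le_one_iff_eq_zero_or_eq_one
        rw [Finset.filter_congr (fun σ _ => hiff σ), Finset.filter_or]
        apply Finset.card_union_of_disjoint
        apply Finset.disjoint_left.mpr
        intro σ hσ hσ'
        have e0 := (Finset.mem_filter.mp hσ).2
        have e1 := (Finset.mem_filter.mp hσ').2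
        omega
      have h2N : 2 * N ≤ (G.degree v + 1) *
          (Finset.univ.filter (fun σ : V ≃ Fin n => P v σ)).card := by
        rw [← hTcard v, hsplit, Nat.mul_add, two_mul]
        exact Nat.add_le_add h0 h1
      have hmin : min (1:ℝ) (2 / (G.degree v + 1)) = 2 / (G.degree v + 1) := by
        apply min_eq_right
        rw [div_le_one (by positivity)]
        have : (1:ℝ) ≤ (G.degree v : ℝ) := by exact_mod_cast hd1
        linarith
      rw [hmin]
      have hdpos : (0:ℝ) < (G.degree v : ℝ) + 1 := by positivity
      rw [mul_div_assoc' , div_le_iff₀ hdpos]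
      have h2N' : ((2 * N : ℕ) : ℝ) ≤ (((G.degree v + 1) *
          (Finset.univ.filter (fun σ : V ≃ Fin n => P v σ)).card : ℕ) : ℝ) := by
        exact_mod_cast h2N
      push_cast at h2N'
      linarith
  -- sum exchange
  have hsumN : ∑ σ : V ≃ Fin n, (Sf σ).card =
      ∑ v : V, (Finset.univ.filter (fun σ : V ≃ Fin n => P v σ)).card := by
    simp only [hSf, Finset.card_filter]
    exact Finset.sum_comm
  have hsum : ∑ σ : V ≃ Fin n, ((Sf σ).card : ℝ) =
      ∑ v : V, ((Finset.univ.filter (fun σ : V ≃ Fin n => P v σ)).card : ℝ) := by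
    exact_mod_cast congrArg (fun k : ℕ => (k : ℝ)) hsumN
  have htot : ∑ _σ : V ≃ Fin n, (∑ v : V, min (1:ℝ) (2 / (G.degree v + 1))) ≤
      ∑ σ : V ≃ Fin n, ((Sf σ).card : ℝ) := by
    rw [hsum, Finset.sum_const, Finset.card_univ, ← hNdef, nsmul_eq_mul, Finset.mul_sum]
    exact Finset.sum_le_sum (fun v _ => hkey v)
  have hne : (Finset.univ : Finset (V ≃ Fin n)).Nonempty :=
    ⟨Fintype.equivFin V, Finset.mem_univ _⟩
  obtain ⟨σ₀, _, hσ₀⟩ := Finset.exists_le_of_sum_le hne htot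
  exact ⟨Sf σ₀, hac σ₀, hσ₀⟩
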